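/- arXiv:1307.4861 — 2 statements merged into one kernel-verified Lean document; each statement's English description precedes it below -/
import Mathlib

section
/- In the lamplighter group ℤ ≀ ℤ with standard generators a and t, every element is a product of 3 palindromes over {a, t}. -/
/-- A palindromic word over `X`: a finite list of elements of `X ∪ X⁻¹`
that reads the same forwards and backwards. -/
def IsPalindromicWord {G : Type*} [Group G] (X : Set G) (w : List G) : Prop :=
  (∀ g ∈ w, g ∈ X ∨ g⁻¹ ∈ X) ∧ w.reverse = w

/-- `g` is a product (in order) of the evaluations of `n` palindromic words over `X`. -/
def IsProdOfPalindromes {G : Type*} [Group G] (X : Set G) (n : ℕ) (g : G) : Prop :=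
  ∃ ws : List (List G), ws.length = n ∧ (∀ w ∈ ws, IsPalindromicWord X w) ∧
    (ws.map List.prod).prod = g

/-- The shift automorphism of `⨁_ℤ ℤ` (written multiplicatively): `(n • f) x = f (x - n)`. -/
noncomputable def lampShiftAut (n : ℤ) : Multiplicative (ℤ →₀ ℤ) ≃* Multiplicative (ℤ →₀ ℤ) :=
  AddEquiv.toMultiplicative (Finsupp.domCongr (Equiv.addRight n))

lemma lampShiftAut_apply (n : ℤ) (f : Multiplicative (ℤ →₀ ℤ)) (x : ℤ) :
    Multiplicative.toAdd (lampShiftAut n f) x = Multiplicative.toAdd f (x - n) := by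
  simp [lampShiftAut, Finsupp.domCongr_apply, sub_eq_add_neg]

/-- `ℤ` acting on `⨁_ℤ ℤ` by shifts. -/
noncomputable def lampShift : Multiplicative ℤ →* MulAut (Multiplicative (ℤ →₀ ℤ)) where
  toFun n := lampShiftAut n.toAdd
  map_one' := by
    ext f : 1
    apply (Multiplicative.toAdd).injective
    ext x
    rw [MulAut.one_apply, lampShiftAut_apply]
    norm_num
  map_mul' m n := by
    ext f : 1
    apply (Multiplicative.toAdd).injective
    ext x
    rw [MulAut.mul_apply, lampShiftAut_apply, lampShiftAut_apply, lampShiftAut_apply,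
      toAdd_mul]
    ring_nf

/-- The lamplighter group `ℤ ≀ ℤ = (⨁_ℤ ℤ) ⋊ ℤ`. -/
abbrev Lamplighter := Multiplicative (ℤ →₀ ℤ) ⋊[lampShift] Multiplicative ℤ

/-- The standard generator `a = (Δ₁, 0)` of `ℤ ≀ ℤ`. -/
noncomputable def genA : Lamplighter := ⟨Multiplicative.ofAdd (Finsupp.single 0 1), 1⟩

/-- The standard generator `t = (0, 1)` of `ℤ ≀ ℤ`. -/
noncomputable def genT : Lamplighter := ⟨1, Multiplicative.ofAdd 1⟩
namespace Scratch

noncomputable def mk (f : ℤ →₀ ℤ) (m : ℤ) : Lamplighter :=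
  ⟨Multiplicative.ofAdd f, Multiplicative.ofAdd m⟩

noncomputable def sh (m : ℤ) (f : ℤ →₀ ℤ) : ℤ →₀ ℤ :=
  Finsupp.domCongr (M := ℤ) (Equiv.addRight m) f

lemma sh_apply (m : ℤ) (f : ℤ →₀ ℤ) (x : ℤ) : sh m f x = f (x - m) := by
  simp only [sh, Finsupp.domCongr_apply, Finsupp.equivMapDomain_apply]
  congr 1

lemma sh_single (m i v : ℤ) : sh m (Finsupp.single i v) = Finsupp.single (i + m) v := by
  ext x
  rw [sh_apply, Finsupp.single_apply, Finsupp.single_apply]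
  by_cases h : i = x - m
  · rw [if_pos h, if_pos (by omega)]
  · rw [if_neg h, if_neg (by omega)]

lemma sh_add (m : ℤ) (f g : ℤ →₀ ℤ) : sh m (f + g) = sh m f + sh m g :=
  map_add (Finsupp.domCongr (M := ℤ) (Equiv.addRight m)) f g

lemma sh_zero (m : ℤ) : sh m (0 : ℤ →₀ ℤ) = 0 :=
  map_zero (Finsupp.domCongr (M := ℤ) (Equiv.addRight m))

lemma sh_sh (m k : ℤ) (f : ℤ →₀ ℤ) : sh m (sh k f) = sh (m + k) f := by
  ext x; rw [sh_apply, sh_apply, sh_apply]; ring_nf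

lemma sh_zero' (f : ℤ →₀ ℤ) : sh 0 f = f := by
  ext x; rw [sh_apply]; norm_num

lemma mul_mk (f g : ℤ →₀ ℤ) (m k : ℤ) :
    mk f m * mk g k = mk (f + sh m g) (m + k) := by
  show (⟨_, _⟩ : Lamplighter) = _
  congr 1

lemma genA_eq : genA = mk (Finsupp.single 0 1) 0 := rfl
lemma genT_eq : genT = mk 0 1 := rfl

end Scratch
namespace Scratch

lemma genA_zpow (c : ℤ) : genA ^ c = mk (Finsupp.single 0 c) 0 := by
  have h : genA = SemidirectProduct.inl (Multiplicative.ofAdd (Finsupp.single (0:ℤ) (1:ℤ))) := rfl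
  rw [h, ← map_zpow]
  have : (Multiplicative.ofAdd (Finsupp.single (0:ℤ) (1:ℤ))) ^ c
      = Multiplicative.ofAdd (Finsupp.single (0:ℤ) c) := by
    rw [← ofAdd_zsmul]
    congr 1
    rw [Finsupp.smul_single]
    norm_num
  rw [this]; rfl

lemma genT_zpow (k : ℤ) : genT ^ k = mk 0 k := by
  have h : genT = SemidirectProduct.inr (Multiplicative.ofAdd (1:ℤ)) := rfl
  rw [h, ← map_zpow]
  have : (Multiplicative.ofAdd (1:ℤ)) ^ k = Multiplicative.ofAdd k := by
    rw [← ofAdd_zsmul]; norm_num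
  rw [this]; rfl

def IsPal (g : Lamplighter) : Prop :=
  ∃ w : List Lamplighter, IsPalindromicWord {genA, genT} w ∧ w.prod = g

lemma isPal_one : IsPal 1 := ⟨[], ⟨by simp, rfl⟩, rfl⟩

lemma isPal_zpow_of_mem {x : Lamplighter} (hx : x ∈ ({genA, genT} : Set Lamplighter))
    (c : ℤ) : IsPal (x ^ c) := by
  rcases le_or_gt 0 c with h | h
  · refine ⟨List.replicate c.natAbs x, ⟨?_, ?_⟩, ?_⟩
    · intro g hg; rw [List.eq_of_mem_replicate hg]; exact Or.inl hx
    · exact List.reverse_replicate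
    · rw [List.prod_replicate, ← zpow_natCast, Int.natAbs_of_nonneg h]
  · refine ⟨List.replicate c.natAbs x⁻¹, ⟨?_, ?_⟩, ?_⟩
    · intro g hg; rw [List.eq_of_mem_replicate hg]; exact Or.inr (by simpa using hx)
    · exact List.reverse_replicate
    · rw [List.prod_replicate, inv_pow, ← zpow_natCast, ← zpow_neg]
      congr 1; omega

lemma isPal_sandwich {g h : Lamplighter} (hg : IsPal g) (hh : IsPal h) :
    IsPal (h * g * h) := by
  obtain ⟨w, ⟨hw1, hw2⟩, hw3⟩ := hg
  obtain ⟨v, ⟨hv1, hv2⟩, hv3⟩ := hh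
  refine ⟨v ++ w ++ v, ⟨?_, ?_⟩, ?_⟩
  · intro x hx
    rcases List.mem_append.1 hx with hx | hx
    · rcases List.mem_append.1 hx with hx | hx
      exacts [hv1 x hx, hw1 x hx]
    · exact hv1 x hx
  · rw [List.reverse_append, List.reverse_append, hv2, hw2]
    simp [List.append_assoc]
  · rw [List.prod_append, List.prod_append, hw3, hv3]

end Scratch
namespace Scratch

lemma isPal_genA_zpow (c : ℤ) : IsPal (mk (Finsupp.single 0 c) 0) := by
  rw [← genA_zpow]; exact isPal_zpow_of_mem (by simp) c

lemma isPal_genT_zpow (k : ℤ) : IsPal (mk 0 k) := by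
  rw [← genT_zpow]; exact isPal_zpow_of_mem (by simp) k

/-- t^d sandwich -/
lemma tpow_sandwich (d : ℤ) (f : ℤ →₀ ℤ) (m : ℤ) :
    mk 0 d * mk f m * mk 0 d = mk (sh d f) (m + 2 * d) := by
  rw [mul_mk, mul_mk, sh_zero]
  congr 1
  · abel
  · ring

/-- a^c sandwich -/
lemma apow_sandwich (c : ℤ) (f : ℤ →₀ ℤ) (m : ℤ) :
    mk (Finsupp.single 0 c) 0 * mk f m * mk (Finsupp.single 0 c) 0
      = mk (Finsupp.single 0 c + f + Finsupp.single m c) m := by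
  rw [mul_mk, mul_mk, sh_zero', sh_single, zero_add, zero_add, add_zero]

lemma isPal_shift {f : ℤ →₀ ℤ} {m : ℤ} (h : IsPal (mk f m)) (d : ℤ) :
    IsPal (mk (sh d f) (m + 2 * d)) := by
  rw [← tpow_sandwich]
  exact isPal_sandwich h (isPal_genT_zpow d)

/-- symmetric about 0 -/
noncomputable def sym0 (b : ℕ → ℤ) (N : ℕ) : ℤ →₀ ℤ :=
  Finsupp.single 0 (b 0) +
    ∑ j ∈ Finset.range N,
      (Finsupp.single ((j:ℤ) + 1) (b (j+1)) + Finsupp.single (-((j:ℤ) + 1)) (b (j+1)))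

/-- symmetric about 1/2 -/
noncomputable def sym1 (c : ℕ → ℤ) (N : ℕ) : ℤ →₀ ℤ :=
  ∑ j ∈ Finset.range N,
    (Finsupp.single ((j:ℤ) + 1) (c (j+1)) + Finsupp.single (1 - ((j:ℤ) + 1)) (c (j+1)))

lemma sym0_succ (b : ℕ → ℤ) (N : ℕ) :
    sym0 b (N+1) = sym0 b N
      + (Finsupp.single ((N:ℤ) + 1) (b (N+1)) + Finsupp.single (-((N:ℤ) + 1)) (b (N+1))) := by
  rw [sym0, sym0, Finset.sum_range_succ, add_assoc]

lemma sym1_succ (c : ℕ → ℤ) (N : ℕ) :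
    sym1 c (N+1) = sym1 c N
      + (Finsupp.single ((N:ℤ) + 1) (c (N+1)) + Finsupp.single (1 - ((N:ℤ) + 1)) (c (N+1))) := by
  rw [sym1, sym1, Finset.sum_range_succ]

lemma isPal_sym0_aux (b : ℕ → ℤ) : ∀ N : ℕ, IsPal (mk (sh N (sym0 b N)) (2 * N)) := by
  intro N
  induction N with
  | zero =>
      have h0 : sym0 b 0 = Finsupp.single 0 (b 0) := by simp [sym0]
      rw [h0]
      simpa [sh_zero'] using isPal_genA_zpow (b 0)
  | succ N ih =>
      have key := isPal_sandwich (isPal_sandwich ih (isPal_genT_zpow 1))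
        (isPal_genA_zpow (b (N+1)))
      rw [tpow_sandwich, apow_sandwich] at key
      have hf : Finsupp.single 0 (b (N+1)) + sh 1 (sh (N:ℤ) (sym0 b N))
            + Finsupp.single (2 * (N:ℤ) + 2 * 1) (b (N+1))
          = sh ((N:ℤ)+1) (sym0 b (N+1)) := by
        rw [sym0_succ, sh_add, sh_add, sh_single, sh_single, sh_sh,
          show (1:ℤ) + (N:ℤ) = (N:ℤ) + 1 from by ring,
          show ((N:ℤ)+1) + ((N:ℤ)+1) = 2*(N:ℤ) + 2*1 from by ring,
          show (-((N:ℤ)+1)) + ((N:ℤ)+1) = 0 from by ring]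
        abel
      rw [hf] at key
      push_cast
      convert key using 2
      ring

end Scratch
namespace Scratch

lemma isPal_sym1_aux (c : ℕ → ℤ) : ∀ k : ℕ, IsPal (mk (sh k (sym1 c (k+1))) (2 * k + 1)) := by
  intro k
  induction k with
  | zero =>
      have h0 : sym1 c 1 = Finsupp.single 0 (c 1) + 0 + Finsupp.single 1 (c 1) := by
        rw [sym1]
        rw [Finset.sum_range_one]
        push_cast
        abel
      have key := isPal_sandwich (isPal_genT_zpow 1) (isPal_genA_zpow (c 1))
      rw [apow_sandwich] at key
      rw [show ((0:ℕ):ℤ) = 0 from rfl, sh_zero', h0]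
      convert key using 2
      ring
  | succ k ih =>
      have key := isPal_sandwich (isPal_sandwich ih (isPal_genT_zpow 1))
        (isPal_genA_zpow (c (k+2)))
      rw [tpow_sandwich, apow_sandwich] at key
      have hf : Finsupp.single 0 (c (k+2)) + sh 1 (sh (k:ℤ) (sym1 c (k+1)))
            + Finsupp.single (2 * (k:ℤ) + 1 + 2 * 1) (c (k+2))
          = sh ((k:ℤ)+1) (sym1 c (k+2)) := by
        have h2 : sym1 c (k+2) = sym1 c (k+1)
            + (Finsupp.single (((k+1:ℕ):ℤ) + 1) (c (k+2))
              + Finsupp.single (1 - (((k+1:ℕ):ℤ) + 1)) (c (k+2))) := sym1_succ c (k+1)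
        rw [h2, sh_add, sh_add, sh_single, sh_single, sh_sh,
          show (1:ℤ) + (k:ℤ) = (k:ℤ) + 1 from by ring]
        push_cast
        rw [show ((k:ℤ)+1+1) + ((k:ℤ)+1) = 2*(k:ℤ) + 1 + 2*1 from by ring,
          show (1 - ((k:ℤ)+1+1)) + ((k:ℤ)+1) = 0 from by ring]
        abel
      rw [hf] at key
      push_cast
      convert key using 2
      ring

end Scratch
namespace Scratch

lemma eval_sym0 (b : ℕ → ℤ) (N : ℕ) (x : ℤ) :
    sym0 b N x = if x.natAbs ≤ N then b x.natAbs else 0 := by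
  induction N with
  | zero =>
      have h0 : sym0 b 0 = Finsupp.single 0 (b 0) := by simp [sym0]
      rw [h0, Finsupp.single_apply]
      by_cases h : x = 0
      · rw [if_pos (show (0:ℤ) = x from by omega), if_pos (show x.natAbs ≤ 0 from by omega)]
        have : x.natAbs = 0 := by omega
        rw [this]
      · rw [if_neg (show ¬((0:ℤ) = x) from by omega),
          if_neg (show ¬(x.natAbs ≤ 0) from by omega)]
  | succ N ih =>
      rw [sym0_succ, Finsupp.add_apply, Finsupp.add_apply, ih,
        Finsupp.single_apply, Finsupp.single_apply]
      by_cases h1 : x.natAbs ≤ N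
      · rw [if_pos h1,
          if_neg (show ¬((N:ℤ) + 1 = x) from by omega),
          if_neg (show ¬(-((N:ℤ) + 1) = x) from by omega),
          if_pos (show x.natAbs ≤ N + 1 from by omega)]
        ring
      · by_cases h2 : (N:ℤ) + 1 = x
        · have ha : x.natAbs = N + 1 := by omega
          rw [if_neg h1, if_pos h2,
            if_neg (show ¬(-((N:ℤ) + 1) = x) from by omega),
            if_pos (show x.natAbs ≤ N + 1 from by omega), ha]
          ring
        · by_cases h3 : -((N:ℤ) + 1) = x
          · have ha : x.natAbs = N + 1 := by omega
            rw [if_neg h1, if_neg h2, if_pos h3,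
              if_pos (show x.natAbs ≤ N + 1 from by omega), ha]
            ring
          · rw [if_neg h1, if_neg h2, if_neg h3,
              if_neg (show ¬(x.natAbs ≤ N + 1) from by omega)]
            ring

lemma eval_sym1 (c : ℕ → ℤ) (N : ℕ) (x : ℤ) :
    sym1 c N x = if 1 ≤ x ∧ x ≤ N then c x.toNat
      else if 1 - N ≤ x ∧ x ≤ 0 then c (1 - x).toNat else 0 := by
  induction N with
  | zero =>
      rw [show sym1 c 0 = 0 from by simp [sym1],
        if_neg (show ¬(1 ≤ x ∧ x ≤ ((0:ℕ):ℤ)) from by push_cast; omega),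
        if_neg (show ¬(1 - ((0:ℕ):ℤ) ≤ x ∧ x ≤ 0) from by push_cast; omega)]
      rfl
  | succ N ih =>
      rw [sym1_succ, Finsupp.add_apply, Finsupp.add_apply, ih,
        Finsupp.single_apply, Finsupp.single_apply]
      by_cases h1 : 1 ≤ x ∧ x ≤ (N:ℤ)
      · rw [if_pos h1,
          if_neg (show ¬((N:ℤ) + 1 = x) from by omega),
          if_neg (show ¬(1 - ((N:ℤ) + 1) = x) from by omega),
          if_pos (show 1 ≤ x ∧ x ≤ ((N+1:ℕ):ℤ) from by push_cast; omega)]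
        ring
      · by_cases h2 : (N:ℤ) + 1 = x
        · have ha : x.toNat = N + 1 := by omega
          rw [if_neg h1, if_pos h2,
            if_neg (show ¬(1 - ((N:ℤ) + 1) = x) from by omega),
            if_neg (show ¬(1 - (N:ℤ) ≤ x ∧ x ≤ 0) from by omega),
            if_pos (show 1 ≤ x ∧ x ≤ ((N+1:ℕ):ℤ) from by push_cast; omega), ha]
          ring
        · by_cases h3 : 1 - ((N:ℤ) + 1) = x
          · have ha : (1 - x).toNat = N + 1 := by omega
            rw [if_neg h1, if_neg h2, if_pos h3,
              if_neg (show ¬(1 - (N:ℤ) ≤ x ∧ x ≤ 0) from by omega),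
              if_neg (show ¬(1 ≤ x ∧ x ≤ ((N+1:ℕ):ℤ)) from by push_cast; omega),
              if_pos (show 1 - ((N+1:ℕ):ℤ) ≤ x ∧ x ≤ 0 from by push_cast; omega), ha]
            ring
          · by_cases h4 : 1 - (N:ℤ) ≤ x ∧ x ≤ 0
            · rw [if_neg h1, if_neg h2, if_neg h3, if_pos h4,
                if_neg (show ¬(1 ≤ x ∧ x ≤ ((N+1:ℕ):ℤ)) from by push_cast; omega),
                if_pos (show 1 - ((N+1:ℕ):ℤ) ≤ x ∧ x ≤ 0 from by push_cast; omega)]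
              ring
            · rw [if_neg h1, if_neg h2, if_neg h3, if_neg h4,
                if_neg (show ¬(1 ≤ x ∧ x ≤ ((N+1:ℕ):ℤ)) from by push_cast; omega),
                if_neg (show ¬(1 - ((N+1:ℕ):ℤ) ≤ x ∧ x ≤ 0) from by push_cast; omega)]
              ring

end Scratch
namespace Scratch

noncomputable def bfun (F : ℤ →₀ ℤ) (y : ℤ) : ℤ :=
  (∑ x ∈ F.support, if x ≤ -y then F x else 0)
    - (∑ x ∈ F.support, if y + 1 ≤ x then F x else 0)

lemma bfun_rec (F : ℤ →₀ ℤ) (y : ℤ) :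
    bfun F y - bfun F (y - 1) = F y - F (1 - y) := by
  have h1 : (∑ x ∈ F.support, if x ≤ -y then F x else 0)
      - (∑ x ∈ F.support, if x ≤ -(y-1) then F x else 0) = -F (1 - y) := by
    rw [← Finset.sum_sub_distrib]
    have hcong : ∀ x ∈ F.support,
        ((if x ≤ -y then F x else 0) - (if x ≤ -(y-1) then F x else 0))
          = -(if x = 1 - y then F x else 0) := by
      intro x hx
      by_cases ha : x ≤ -y
      · rw [if_pos ha, if_pos (show x ≤ -(y-1) from by omega),
          if_neg (show ¬(x = 1 - y) from by omega)]
        ring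
      · by_cases hb : x = 1 - y
        · rw [if_neg ha, if_pos (show x ≤ -(y-1) from by omega), if_pos hb]; ring
        · rw [if_neg ha, if_neg (show ¬(x ≤ -(y-1)) from by omega), if_neg hb]; ring
    rw [Finset.sum_congr rfl hcong, Finset.sum_neg_distrib, Finset.sum_ite_eq' F.support]
    by_cases h : 1 - y ∈ F.support
    · rw [if_pos h]
    · rw [if_neg h, Finsupp.notMem_support_iff.mp h]
  have h2 : (∑ x ∈ F.support, if y + 1 ≤ x then F x else 0)
      - (∑ x ∈ F.support, if (y-1) + 1 ≤ x then F x else 0) = -F y := by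
    rw [← Finset.sum_sub_distrib]
    have hcong : ∀ x ∈ F.support,
        ((if y + 1 ≤ x then F x else 0) - (if (y-1) + 1 ≤ x then F x else 0))
          = -(if x = y then F x else 0) := by
      intro x hx
      by_cases ha : y + 1 ≤ x
      · rw [if_pos ha, if_pos (show (y-1) + 1 ≤ x from by omega),
          if_neg (show ¬(x = y) from by omega)]
        ring
      · by_cases hb : x = y
        · rw [if_neg ha, if_pos (show (y-1) + 1 ≤ x from by omega), if_pos hb]; ring
        · rw [if_neg ha, if_neg (show ¬((y-1) + 1 ≤ x) from by omega), if_neg hb]; ring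
    rw [Finset.sum_congr rfl hcong, Finset.sum_neg_distrib, Finset.sum_ite_eq' F.support]
    by_cases h : y ∈ F.support
    · rw [if_pos h]
    · rw [if_neg h, Finsupp.notMem_support_iff.mp h]
  rw [bfun, bfun]
  have := h1
  have := h2
  linarith

lemma bfun_vanish (F : ℤ →₀ ℤ) (y : ℤ) (hy : ∀ x ∈ F.support, -y < x ∧ x < y + 1) :
    bfun F y = 0 := by
  rw [bfun]
  rw [Finset.sum_eq_zero, Finset.sum_eq_zero]
  · ring
  · intro x hx; rw [if_neg (show ¬(y + 1 ≤ x) from by have := hy x hx; omega)]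
  · intro x hx; rw [if_neg (show ¬(x ≤ -y) from by have := hy x hx; omega)]

end Scratch
namespace Scratch

lemma decomp (F : ℤ →₀ ℤ) :
    ∃ (N : ℕ) (b c : ℕ → ℤ), 1 ≤ N ∧ F = sym0 b N + sym1 c N := by
  set N : ℕ := (F.support.sup fun x => x.natAbs) + 1 with hNdef
  have hsupp : ∀ x ∈ F.support, x.natAbs < N := by
    intro x hx
    exact Nat.lt_succ_of_le (Finset.le_sup (f := fun x : ℤ => x.natAbs) hx)
  have hvan : ∀ z : ℤ, ((N:ℤ) ≤ z ∨ z ≤ -(N:ℤ)) → F z = 0 := by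
    intro z hz
    by_contra h
    have := hsupp z (Finsupp.mem_support_iff.mpr h)
    omega
  refine ⟨N, fun j => bfun F j, fun j => F j - bfun F j, Nat.le_add_left 1 _, ?_⟩
  ext x
  rw [Finsupp.add_apply, eval_sym0, eval_sym1]
  by_cases h1 : 1 ≤ x ∧ x ≤ (N:ℤ)
  · rw [if_pos (show x.natAbs ≤ N from by omega), if_pos h1]
    have hb : ((x.natAbs : ℕ) : ℤ) = x := by omega
    have ht : ((x.toNat : ℕ) : ℤ) = x := by omega
    rw [hb, ht]
    ring
  · by_cases h0 : 1 - (N:ℤ) ≤ x ∧ x ≤ 0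
    · rw [if_pos (show x.natAbs ≤ N from by omega), if_neg h1, if_pos h0]
      have hb : ((x.natAbs : ℕ) : ℤ) = -x := by omega
      have ht : (((1 - x).toNat : ℕ) : ℤ) = 1 - x := by omega
      rw [hb, ht]
      have hrec := bfun_rec F (1 - x)
      rw [show (1:ℤ) - x - 1 = -x from by ring, show (1:ℤ) - (1 - x) = x from by ring] at hrec
      linarith
    · by_cases hm : x = -(N:ℤ)
      · rw [if_pos (show x.natAbs ≤ N from by omega), if_neg h1, if_neg h0]
        have hb : ((x.natAbs : ℕ) : ℤ) = (N:ℤ) := by omega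
        rw [hb]
        have hz : bfun F (N:ℤ) = 0 := by
          apply bfun_vanish
          intro z hz
          have := hsupp z hz
          omega
        rw [hz, hvan x (by omega)]
        ring
      · rw [if_neg (show ¬(x.natAbs ≤ N) from by omega), if_neg h1, if_neg h0,
          hvan x (by omega)]
        ring

end Scratch
namespace Scratch

lemma isPal_sym0 (b : ℕ → ℤ) (N : ℕ) : IsPal (mk (sym0 b N) 0) := by
  have h := isPal_shift (isPal_sym0_aux b N) (-(N:ℤ))
  rw [sh_sh, show -(N:ℤ) + (N:ℤ) = 0 from by ring, sh_zero',
    show 2 * (N:ℤ) + 2 * (-(N:ℤ)) = 0 from by ring] at h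
  exact h

lemma isPal_sym1_shift (c : ℕ → ℤ) (k : ℕ) (s : ℤ) :
    IsPal (mk (sh s (sym1 c (k+1))) (2 * s + 1)) := by
  have h := isPal_shift (isPal_sym1_aux c k) (s - (k:ℤ))
  rw [sh_sh, show s - (k:ℤ) + (k:ℤ) = s from by ring,
    show 2 * (k:ℤ) + 1 + 2 * (s - (k:ℤ)) = 2 * s + 1 from by ring] at h
  exact h

lemma isProd3 {g1 g2 g3 : Lamplighter} (h1 : IsPal g1) (h2 : IsPal g2) (h3 : IsPal g3) :
    IsProdOfPalindromes {genA, genT} 3 (g1 * g2 * g3) := by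
  obtain ⟨w1, hw1, hp1⟩ := h1
  obtain ⟨w2, hw2, hp2⟩ := h2
  obtain ⟨w3, hw3, hp3⟩ := h3
  refine ⟨[w1, w2, w3], rfl, ?_, ?_⟩
  · intro w hw
    simp only [List.mem_cons, List.not_mem_nil, or_false] at hw
    rcases hw with rfl | rfl | rfl
    · exact hw1
    · exact hw2
    · exact hw3
  · simp only [List.map_cons, List.map_nil, List.prod_cons, List.prod_nil, mul_one]
    rw [hp1, hp2, hp3, mul_assoc]

theorem main : ∀ g : Lamplighter, IsProdOfPalindromes {genA, genT} 3 g := by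
  intro g
  obtain ⟨l, r⟩ := g
  set F : ℤ →₀ ℤ := Multiplicative.toAdd l with hF
  set n : ℤ := Multiplicative.toAdd r with hn
  have hg : (⟨l, r⟩ : Lamplighter) = mk F n := rfl
  rw [hg]
  obtain ⟨N, b, c, hN1, hdec⟩ := decomp F
  obtain ⟨k, rfl⟩ : ∃ k, N = k + 1 := ⟨N - 1, by omega⟩
  have hprod : mk F n = mk (sym0 b (k+1)) 0 * mk 0 (1 - n)
      * mk (sh (n-1) (sym1 c (k+1))) (2 * (n-1) + 1) := by
    rw [mul_mk, mul_mk, sh_zero, add_zero, sh_sh, zero_add,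
      show (1 - n) + (n - 1) = 0 from by ring, sh_zero', hdec]
    congr 1
    ring
  rw [hprod]
  exact isProd3 (isPal_sym0 b (k+1)) (isPal_genT_zpow (1-n))
    (isPal_sym1_shift c k (n-1))

end Scratch

theorem lamplighter_palindromic_width_le_three :
    ∀ g : Lamplighter, IsProdOfPalindromes {genA, genT} 3 g :=
  Scratch.main
end

section
/- An element (g, m) of the lamplighter group ℤ ≀ ℤ is the evaluation of a single palindromic word over the standard generators {a, t} if and only if g(x) = g(m − x) for all x ∈ ℤ. -/
-- auxiliary stuff

/-- The reversal anti-automorphism of the lamplighter group. -/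
noncomputable def lampRev (p : Lamplighter) : Lamplighter :=
  ⟨Multiplicative.ofAdd (Finsupp.equivMapDomain (Equiv.subLeft p.right.toAdd) p.left.toAdd),
    p.right⟩

lemma lampRev_left_apply (p : Lamplighter) (x : ℤ) :
    (lampRev p).left.toAdd x = p.left.toAdd (p.right.toAdd - x) := by
  simp only [lampRev, toAdd_ofAdd, Finsupp.equivMapDomain_apply, Equiv.subLeft_symm_apply]
  congr 1
  ring

lemma lampRev_right (p : Lamplighter) : (lampRev p).right = p.right := rfl

lemma lamp_ext {p q : Lamplighter} (h1 : ∀ x, p.left.toAdd x = q.left.toAdd x)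
    (h2 : p.right = q.right) : p = q := by
  refine SemidirectProduct.ext ?_ h2
  apply Multiplicative.toAdd.injective
  exact Finsupp.ext h1

lemma mul_left_apply (p q : Lamplighter) (x : ℤ) :
    (p * q).left.toAdd x = p.left.toAdd x + q.left.toAdd (x - p.right.toAdd) := by
  rw [SemidirectProduct.mul_left, toAdd_mul]
  rw [Finsupp.add_apply]
  exact congrArg (Multiplicative.toAdd p.left x + ·) (lampShiftAut_apply _ _ _)

lemma lampRev_mul (p q : Lamplighter) : lampRev (p * q) = lampRev q * lampRev p := by
  refine lamp_ext (fun x => ?_) ?_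
  · simp only [mul_left_apply, lampRev_left_apply, lampRev_right, SemidirectProduct.mul_right,
      toAdd_mul]
    ring_nf
  · simp [lampRev_right, SemidirectProduct.mul_right, mul_comm]

lemma lampRev_one : lampRev (1 : Lamplighter) = 1 := by
  refine lamp_ext (fun x => ?_) rfl
  rw [lampRev_left_apply]
  simp

lemma lampRev_inv (p : Lamplighter) : lampRev p⁻¹ = (lampRev p)⁻¹ := by
  have h : lampRev p⁻¹ * lampRev p = 1 := by rw [← lampRev_mul, mul_inv_cancel, lampRev_one]
  exact eq_inv_of_mul_eq_one_left h

lemma lampRev_genA : lampRev genA = genA := by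
  refine lamp_ext (fun x => ?_) rfl
  rw [lampRev_left_apply]
  show (Finsupp.single 0 1 : ℤ →₀ ℤ) ((0:ℤ) - x) = (Finsupp.single 0 1 : ℤ →₀ ℤ) x
  rcases eq_or_ne x 0 with rfl | hx
  · norm_num
  · rw [Finsupp.single_eq_of_ne (by omega), Finsupp.single_eq_of_ne (by omega)]

lemma lampRev_genT : lampRev genT = genT := by
  refine lamp_ext (fun x => ?_) rfl
  rw [lampRev_left_apply]
  rfl

lemma lampRev_fixed_of_mem {l : Lamplighter}
    (h : l ∈ ({genA, genT} : Set Lamplighter) ∨ l⁻¹ ∈ ({genA, genT} : Set Lamplighter)) :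
    lampRev l = l := by
  rcases h with h | h
  · rcases h with rfl | rfl
    · exact lampRev_genA
    · exact lampRev_genT
  · have : l = (l⁻¹)⁻¹ := (inv_inv l).symm
    rw [this]
    rcases h with h | h <;> rw [h, lampRev_inv]
    · rw [lampRev_genA]
    · rw [lampRev_genT]

lemma lampRev_list_prod (w : List Lamplighter) (h : ∀ l ∈ w, lampRev l = l) :
    lampRev w.prod = w.reverse.prod := by
  induction w with
  | nil => simpa using lampRev_one
  | cons l w ih =>
    rw [List.prod_cons, lampRev_mul, List.reverse_cons, List.prod_append, List.prod_singleton,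
      ih (fun x hx => h x (List.mem_cons_of_mem _ hx)), h l List.mem_cons_self]

lemma genT_zpow (n : ℤ) : genT ^ n = ⟨1, Multiplicative.ofAdd n⟩ := by
  have h : genT = SemidirectProduct.inr (Multiplicative.ofAdd 1) := rfl
  rw [h, ← map_zpow, ← ofAdd_zsmul]
  norm_num

lemma genA_zpow (k : ℤ) :
    genA ^ k = ⟨Multiplicative.ofAdd (Finsupp.single 0 k), 1⟩ := by
  have h : genA = SemidirectProduct.inl (Multiplicative.ofAdd (Finsupp.single 0 1)) := rfl
  rw [h, ← map_zpow, ← ofAdd_zsmul, Finsupp.smul_single, smul_eq_mul, mul_one]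
  rfl

lemma single_elt (x c : ℤ) :
    (⟨Multiplicative.ofAdd (Finsupp.single x c), 1⟩ : Lamplighter)
      = genT ^ x * genA ^ c * genT ^ (-x) := by
  rw [genT_zpow, genA_zpow, genT_zpow]
  refine lamp_ext (fun y => ?_) ?_
  · rw [mul_left_apply, mul_left_apply]
    simp only [SemidirectProduct.mul_right, toAdd_ofAdd, toAdd_one, toAdd_mul, add_zero,
      zero_add, Finsupp.coe_zero, Pi.zero_apply]
    rw [Finsupp.single_apply, Finsupp.single_apply]
    by_cases hy : x = y
    · rw [if_pos hy, if_pos (by omega)]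
    · rw [if_neg hy, if_neg (by omega)]
  · simp only [SemidirectProduct.mul_right, ← ofAdd_add]
    norm_num

lemma mem_closure_lamp (s : Lamplighter) : s ∈ Subgroup.closure ({genA, genT} : Set Lamplighter) := by
  have hA : genA ∈ Subgroup.closure ({genA, genT} : Set Lamplighter) :=
    Subgroup.subset_closure (by simp)
  have hT : genT ∈ Subgroup.closure ({genA, genT} : Set Lamplighter) :=
    Subgroup.subset_closure (by simp)
  have hsingle : ∀ x c : ℤ, (⟨Multiplicative.ofAdd (Finsupp.single x c), 1⟩ : Lamplighter)
      ∈ Subgroup.closure ({genA, genT} : Set Lamplighter) := by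
    intro x c
    rw [single_elt]
    exact mul_mem (mul_mem (zpow_mem hT x) (zpow_mem hA c)) (zpow_mem hT (-x))
  have hleft : ∀ f : ℤ →₀ ℤ, (⟨Multiplicative.ofAdd f, 1⟩ : Lamplighter)
      ∈ Subgroup.closure ({genA, genT} : Set Lamplighter) := by
    intro f
    induction f using Finsupp.induction with
    | zero => simpa using one_mem _
    | single_add x c f _ _ ih =>
      have : (⟨Multiplicative.ofAdd (Finsupp.single x c + f), 1⟩ : Lamplighter)
          = ⟨Multiplicative.ofAdd (Finsupp.single x c), 1⟩ * ⟨Multiplicative.ofAdd f, 1⟩ := by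
        refine lamp_ext (fun y => ?_) ?_
        · rw [mul_left_apply]
          simp only [toAdd_ofAdd, toAdd_one, Finsupp.add_apply, sub_zero]
        · simp
      rw [this]
      exact mul_mem (hsingle x c) ih
  have hdecomp : s = ⟨s.left, 1⟩ * ⟨1, s.right⟩ := by
    refine lamp_ext (fun y => ?_) ?_
    · rw [mul_left_apply]
      simp
    · simp
  rw [hdecomp]
  refine mul_mem (hleft s.left.toAdd) ?_
  have : (⟨1, s.right⟩ : Lamplighter) = genT ^ s.right.toAdd := by rw [genT_zpow]; simp
  rw [this]
  exact zpow_mem hT _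

lemma exists_word (s : Lamplighter) :
    ∃ u : List Lamplighter,
      (∀ l ∈ u, l ∈ ({genA, genT} : Set Lamplighter) ∨ l⁻¹ ∈ ({genA, genT} : Set Lamplighter)) ∧
      u.prod = s := by
  have hs := mem_closure_lamp s
  rw [← Subgroup.mem_toSubmonoid, Subgroup.closure_toSubmonoid] at hs
  obtain ⟨u, hu, hp⟩ := Submonoid.exists_list_of_mem_closure hs
  refine ⟨u, fun l hl => ?_, hp⟩
  rcases hu l hl with h | h
  · exact Or.inl h
  · exact Or.inr (Set.mem_inv.mp h)

/-- Word for `g ^ n`: a block of `g`s or `g⁻¹`s. -/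
noncomputable def wordZ (g : Lamplighter) (n : ℤ) : List Lamplighter :=
  if 0 ≤ n then List.replicate n.toNat g else List.replicate (-n).toNat g⁻¹

lemma wordZ_prod (g : Lamplighter) (n : ℤ) : (wordZ g n).prod = g ^ n := by
  unfold wordZ
  split_ifs with h
  · rw [List.prod_replicate, ← zpow_natCast, Int.toNat_of_nonneg h]
  · rw [List.prod_replicate, ← zpow_natCast, Int.toNat_of_nonneg (by omega), inv_zpow', neg_neg]

lemma wordZ_reverse (g : Lamplighter) (n : ℤ) : (wordZ g n).reverse = wordZ g n := by
  unfold wordZ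
  split_ifs <;> exact List.reverse_replicate

lemma wordZ_mem (g : Lamplighter) (n : ℤ) {l : Lamplighter} (hl : l ∈ wordZ g n) :
    l = g ∨ l = g⁻¹ := by
  unfold wordZ at hl
  split_ifs at hl
  · exact Or.inl (List.eq_of_mem_replicate hl)
  · exact Or.inr (List.eq_of_mem_replicate hl)

lemma wordZ_letters {g : Lamplighter} (hg : g ∈ ({genA, genT} : Set Lamplighter)) (n : ℤ)
    {l : Lamplighter} (hl : l ∈ wordZ g n) :
    l ∈ ({genA, genT} : Set Lamplighter) ∨ l⁻¹ ∈ ({genA, genT} : Set Lamplighter) := by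
  rcases wordZ_mem g n hl with rfl | rfl
  · exact Or.inl hg
  · rw [inv_inv]
    exact Or.inr hg

/-- The existence of a palindromic core word evaluating to `(h₀, m)` with `h₀` the
center correction. -/
lemma exists_core (m : ℤ) (c : ℤ) :
    ∃ (core : List Lamplighter) (h₀ : ℤ →₀ ℤ),
      core.reverse = core ∧
      (∀ l ∈ core, l ∈ ({genA, genT} : Set Lamplighter)
        ∨ l⁻¹ ∈ ({genA, genT} : Set Lamplighter)) ∧
      core.prod = (⟨Multiplicative.ofAdd h₀, Multiplicative.ofAdd m⟩ : Lamplighter) ∧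
      (∀ x : ℤ, h₀ x = if 2 * x = m then c else 0) := by
  rcases Int.even_or_odd m with ⟨q, hq⟩ | ⟨q, hq⟩
  · refine ⟨wordZ genT q ++ wordZ genA c ++ wordZ genT q, Finsupp.single q c, ?_, ?_, ?_, ?_⟩
    · simp only [List.reverse_append, wordZ_reverse, List.append_assoc]
    · intro l hl
      simp only [List.mem_append] at hl
      rcases hl with (hl | hl) | hl
      · exact wordZ_letters (by simp) q hl
      · exact wordZ_letters (by simp) c hl
      · exact wordZ_letters (by simp) q hl
    · rw [List.prod_append, List.prod_append, wordZ_prod, wordZ_prod, genT_zpow, genA_zpow]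
      refine lamp_ext (fun y => ?_) ?_
      · rw [mul_left_apply, mul_left_apply]
        simp only [SemidirectProduct.mul_right, toAdd_ofAdd, toAdd_one, toAdd_mul, add_zero,
          zero_add, Finsupp.coe_zero, Pi.zero_apply]
        rw [Finsupp.single_apply, Finsupp.single_apply]
        by_cases hy : q = y
        · rw [if_pos (by omega), if_pos hy]
        · rw [if_neg (by omega), if_neg hy]
      · simp only [SemidirectProduct.mul_right, ← ofAdd_add, mul_one, one_mul]
        rw [hq]
    · intro x
      rw [Finsupp.single_apply]
      by_cases hx : q = x
      · rw [if_pos hx, if_pos (by omega)]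
      · rw [if_neg hx, if_neg (by omega)]
  · refine ⟨wordZ genT m, 0, wordZ_reverse _ _, fun l hl => wordZ_letters (by simp) m hl, ?_, ?_⟩
    · rw [wordZ_prod, genT_zpow]
      rfl
    · intro x
      simp only [Finsupp.coe_zero, Pi.zero_apply]
      rw [if_neg (by omega)]


theorem palindrome_iff_symmetric (g : ℤ →₀ ℤ) (m : ℤ) :
    (∃ w : List Lamplighter, IsPalindromicWord {genA, genT} w ∧
        w.prod = (⟨Multiplicative.ofAdd g, Multiplicative.ofAdd m⟩ : Lamplighter)) ↔
      ∀ x : ℤ, g x = g (m - x) := by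
  classical
  constructor
  · rintro ⟨w, ⟨hlet, hrev⟩, hp⟩
    intro x
    have hfix : ∀ l ∈ w, lampRev l = l := fun l hl => lampRev_fixed_of_mem (hlet l hl)
    have h1 : lampRev w.prod = w.prod := by rw [lampRev_list_prod w hfix, hrev]
    rw [hp] at h1
    have h2 := congrArg (fun p : Lamplighter => p.left.toAdd x) h1
    simp only [lampRev_left_apply, toAdd_ofAdd] at h2
    exact h2.symm
  · intro hsym
    set f₀ : ℤ →₀ ℤ := g.filter (fun x => m < 2 * x) with hf₀
    obtain ⟨u, hu, hup⟩ := exists_word ⟨Multiplicative.ofAdd f₀, 1⟩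
    obtain ⟨core, h₀, hcrev, hclet, hcprod, hh₀⟩ := exists_core m (g (m / 2))
    refine ⟨u ++ core ++ u.reverse, ⟨?_, ?_⟩, ?_⟩
    · intro l hl
      simp only [List.mem_append, List.mem_reverse] at hl
      rcases hl with (hl | hl) | hl
      · exact hu l hl
      · exact hclet l hl
      · exact hu l hl
    · simp only [List.reverse_append, List.reverse_reverse, hcrev, List.append_assoc]
    · rw [List.prod_append, List.prod_append, hup, hcprod]
      have hurev : u.reverse.prod
          = lampRev (⟨Multiplicative.ofAdd f₀, 1⟩ : Lamplighter) := by
        rw [← hup]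
        exact (lampRev_list_prod u (fun l hl => lampRev_fixed_of_mem (hu l hl))).symm
      rw [hurev]
      refine lamp_ext (fun x => ?_) ?_
      · rw [mul_left_apply, mul_left_apply, lampRev_left_apply]
        simp only [toAdd_ofAdd, toAdd_one, SemidirectProduct.mul_right, toAdd_mul,
          one_mul, mul_one, zero_add, add_zero, sub_zero]
        rw [hh₀ x]
        have hflt : ∀ y : ℤ, f₀ y = if m < 2 * y then g y else 0 := by
          intro y
          rw [hf₀, Finsupp.filter_apply]
        rw [hflt x, hflt (0 - (x - m))]
        have harg : (0 : ℤ) - (x - m) = m - x := by ring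
        rw [harg]
        rcases lt_trichotomy (2 * x) m with hx | hx | hx
        · rw [if_neg (by omega), if_neg (by omega), if_pos (by omega), ← hsym x]
          ring
        · rw [if_neg (by omega), if_pos (by omega), if_neg (by omega)]
          have : x = m / 2 := by omega
          rw [this]
          ring
        · rw [if_pos (by omega), if_neg (by omega), if_neg (by omega)]
          ring
      · simp only [SemidirectProduct.mul_right, lampRev_right, one_mul, mul_one]
end
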